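/- Define for k ≥ 1 and n = 8k - 2 the points y¹, …, y^{2k} ∈ {0,1}^n and cost vectors c^ℓ (ℓ ≥ 1) as in the bit-scaling worst-case construction. Then for every ℓ ≥ 1 and every j ∈ {1,…,k-1} ∪ {k+1,…,2k-1}, one has c^ℓ·y^j = c^ℓ·y^{j+1} + 1. -/

import Mathlib

/-- The points `y^j ∈ {0,1}^{8k-2}` of the bit-scaling worst-case construction
(coordinates are indexed `1, …, 8k-2`; the four blocks have sizes
`k-1`, `k-1`, `3k`, `3k`). -/
def yvec (k j : ℕ) (i : Fin (8 * k - 2)) : ℤ :=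
  let i' := (i : ℕ) + 1
  let j' := if j ≤ k then j else j - k
  if i' ≤ k - 1 then (if j' ≤ i' then 1 else 0)
  else if i' ≤ 2 * k - 2 then (if i' - (k - 1) < j' then 1 else 0)
  else if i' ≤ 5 * k - 2 then (if j ≤ k then 1 else 0)
  else (if j ≤ k then 0 else 1)

/-- The 0/1 layers `d^ℓ` of the cost vectors of the worst-case construction. -/
def dvec (k l : ℕ) (i : Fin (8 * k - 2)) : ℤ :=
  let i' := (i : ℕ) + 1
  if l = 1 then
    if i' ≤ k - 1 then 1
    else if i' ≤ 2 * k - 2 then 0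
    else if i' ≤ 3 * k - 2 then 1
    else 0
  else
    if i' ≤ k - 1 then 0
    else if i' ≤ 2 * k - 2 then 1
    else if i' ≤ 5 * k - 2 then (if Odd l then 1 else 0)
    else (if Even l then 1 else 0)

/-- The cost vectors `c^ℓ` with `c⁰ = 0` and `c^ℓ = 2c^{ℓ-1} + d^ℓ`. -/
def cvec (k : ℕ) : ℕ → Fin (8 * k - 2) → ℤ
  | 0 => fun _ => 0
  | l + 1 => fun i => 2 * cvec k l i + dvec k (l + 1) i

lemma cvec_block1 (k : ℕ) (i : Fin (8 * k - 2)) (hi : (i : ℕ) + 1 ≤ k - 1) :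
    ∀ l, 1 ≤ l → cvec k l i = 2 ^ (l - 1) := by
  intro l hl
  induction l with
  | zero => omega
  | succ n ih =>
    rcases Nat.eq_or_lt_of_le hl with h | h
    · have hn : n = 0 := by omega
      subst hn
      simp [cvec, dvec, hi]
    · have hn : 1 ≤ n := by omega
      simp only [cvec, dvec]
      rw [ih hn]
      have h1 : ¬ (n + 1 = 1) := by omega
      have h2 : (2:ℤ) ^ (n + 1 - 1) = 2 * 2 ^ (n - 1) := by
        conv_lhs => rw [show n + 1 - 1 = (n - 1) + 1 from by omega]
        rw [pow_succ]; ring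
      rw [h2]
      simp [h1, hi, show n ≠ 0 by omega]

lemma cvec_block2 (k : ℕ) (i : Fin (8 * k - 2)) (hi1 : k - 1 < (i : ℕ) + 1)
    (hi2 : (i : ℕ) + 1 ≤ 2 * k - 2) :
    ∀ l, 1 ≤ l → cvec k l i = 2 ^ (l - 1) - 1 := by
  intro l hl
  induction l with
  | zero => omega
  | succ n ih =>
    rcases Nat.eq_or_lt_of_le hl with h | h
    · have hn : n = 0 := by omega
      subst hn
      simp [cvec, dvec, show ¬ ((i : ℕ) + 1 ≤ k - 1) from by omega, hi2]
    · have hn : 1 ≤ n := by omega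
      simp only [cvec, dvec]
      rw [ih hn]
      have h1 : ¬ (n + 1 = 1) := by omega
      have h2 : (2:ℤ) ^ (n + 1 - 1) = 2 * 2 ^ (n - 1) := by
        conv_lhs => rw [show n + 1 - 1 = (n - 1) + 1 from by omega]
        rw [pow_succ]; ring
      rw [h2]
      simp only [h1, if_neg, if_false]
      rw [if_neg (by omega : ¬ ((i : ℕ) + 1 ≤ k - 1)), if_pos hi2]
      ring

lemma ydiff (k j m : ℕ) (hk : 2 ≤ k) (hm1 : 1 ≤ m) (hm2 : m ≤ k - 1)
    (hcase : (j ≤ k ∧ j = m ∧ j + 1 ≤ k) ∨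
      (¬ j ≤ k ∧ j - k = m ∧ ¬ j + 1 ≤ k ∧ j + 1 - k = m + 1)) (i : Fin (8 * k - 2)) :
    yvec k j i - yvec k (j + 1) i =
      (if (i : ℕ) + 1 = m then 1 else 0) - (if (i : ℕ) + 1 = k - 1 + m then 1 else 0) := by
  simp only [yvec]
  rcases hcase with ⟨h1, h2, h3⟩ | ⟨h1, h2, h3, h4⟩ <;>
    · split_ifs <;> omega

/-- decreasing order within each group: for every `ℓ ≥ 1` and every
`j ∈ {1,…,k-1} ∪ {k+1,…,2k-1}`, one has `c^ℓ·y^j = c^ℓ·y^{j+1} + 1`. -/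
theorem stmt11 (k : ℕ) (hk : 1 ≤ k) (l : ℕ) (hl : 1 ≤ l) (j : ℕ)
    (hj : (1 ≤ j ∧ j ≤ k - 1) ∨ (k + 1 ≤ j ∧ j ≤ 2 * k - 1)) :
    ∑ i, cvec k l i * yvec k j i = ∑ i, cvec k l i * yvec k (j + 1) i + 1 := by
  have hk2 : 2 ≤ k := by omega
  obtain ⟨m, hm1, hm2, hcase⟩ :
      ∃ m, 1 ≤ m ∧ m ≤ k - 1 ∧
        ((j ≤ k ∧ j = m ∧ j + 1 ≤ k) ∨
          (¬ j ≤ k ∧ j - k = m ∧ ¬ j + 1 ≤ k ∧ j + 1 - k = m + 1)) := by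
    rcases hj with ⟨h1, h2⟩ | ⟨h1, h2⟩
    · exact ⟨j, h1, h2, Or.inl ⟨by omega, rfl, by omega⟩⟩
    · exact ⟨j - k, by omega, by omega, Or.inr ⟨by omega, rfl, by omega, by omega⟩⟩
  have ha : m - 1 < 8 * k - 2 := by omega
  have hb : k - 2 + m < 8 * k - 2 := by omega
  let a : Fin (8 * k - 2) := ⟨m - 1, ha⟩
  let b : Fin (8 * k - 2) := ⟨k - 2 + m, hb⟩
  have key : ∑ i, cvec k l i * yvec k j i - ∑ i, cvec k l i * yvec k (j + 1) i = 1 := by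
    rw [← Finset.sum_sub_distrib]
    have e1 : ∀ i : Fin (8 * k - 2),
        cvec k l i * yvec k j i - cvec k l i * yvec k (j + 1) i =
          (if i = a then cvec k l i else 0) - (if i = b then cvec k l i else 0) := by
      intro i
      rw [← mul_sub, ydiff k j m hk2 hm1 hm2 hcase i]
      have e2 : ((i : ℕ) + 1 = m) ↔ (i = a) := by
        rw [Fin.ext_iff]
        show (i : ℕ) + 1 = m ↔ (i : ℕ) = m - 1
        omega
      have e3 : ((i : ℕ) + 1 = k - 1 + m) ↔ (i = b) := by
        rw [Fin.ext_iff]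
        show (i : ℕ) + 1 = k - 1 + m ↔ (i : ℕ) = k - 2 + m
        omega
      simp only [e2, e3]
      split_ifs <;> ring
    rw [Finset.sum_congr rfl fun i _ => e1 i, Finset.sum_sub_distrib,
      Finset.sum_ite_eq' Finset.univ a (cvec k l),
      Finset.sum_ite_eq' Finset.univ b (cvec k l)]
    simp only [Finset.mem_univ, if_true]
    rw [cvec_block1 k a (show m - 1 + 1 ≤ k - 1 by omega) l hl,
      cvec_block2 k b (show k - 1 < k - 2 + m + 1 by omega)
        (show k - 2 + m + 1 ≤ 2 * k - 2 by omega) l hl]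
    ring
  linarith
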